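/- For every n ∈ ℕ, with k = n(n−1)/2 + n, the group of order-preserving group automorphisms of ℚ^n_lex admits an essentially free orientation-preserving affine action on ℝ^k_lex. -/

import Mathlib

/-- `Fin n → R` with the lexicographic order in which the **last** coordinate is the most
significant: `x < y` iff `x ≠ y` and `x i < y i` at the largest index `i` where `x` and `y`
differ. -/
def LexPow (R : Type*) (n : ℕ) : Type _ := Fin n → R

namespace LexPow

variable {R : Type*} {n : ℕ}

/-- The identity bijection between `Fin n → R` and `LexPow R n`. -/
def of : (Fin n → R) ≃ LexPow R n := Equiv.refl _

instance : CoeFun (LexPow R n) (fun _ => Fin n → R) := ⟨fun x => x⟩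

instance [AddCommGroup R] : AddCommGroup (LexPow R n) :=
  inferInstanceAs (AddCommGroup (Fin n → R))

/-- The map reversing coordinates, into the Mathlib lexicographic order (in which the *first*
coordinate is most significant). -/
def toRevLex (x : LexPow R n) : Lex (Fin n → R) :=
  toLex (fun i : Fin n => of.symm x (Fin.rev i))

theorem toRevLex_injective : Function.Injective (toRevLex (R := R) (n := n)) := by
  intro a b hab
  refine of.symm.injective (funext fun i => ?_)
  have h := congrFun (congrArg ofLex hab) (Fin.rev i)
  simpa [toRevLex, Fin.rev_rev] using h

noncomputable instance [LinearOrder R] : LinearOrder (LexPow R n) :=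
  LinearOrder.lift' (toRevLex (R := R) (n := n)) toRevLex_injective

instance [AddCommGroup R] [LinearOrder R] [IsOrderedAddMonoid R] :
    IsOrderedAddMonoid (LexPow R n) where
  add_le_add_left := fun a b hab c => by
    show toRevLex (a + c) ≤ toRevLex (b + c)
    have h : toRevLex a ≤ toRevLex b := hab
    exact add_le_add h le_rfl

end LexPow

/-- An orientation-preserving affine automorphism of a linearly ordered abelian group `Λ`:
an order-preserving bijection `g` of `Λ` admitting an order-preserving group automorphism
`dilation` (the dilation factor) with `g x - g y = dilation (x - y)` for all `x, y`. -/
structure OPAffineAut (Λ : Type*) [AddCommGroup Λ] [LinearOrder Λ] [IsOrderedAddMonoid Λ] extends Λ ≃ Λ where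
  strictMono' : StrictMono toEquiv
  dilation : Λ ≃+ Λ
  dilation_strictMono : StrictMono dilation
  affine : ∀ x y : Λ, toEquiv x - toEquiv y = dilation (x - y)

namespace OPAffineAut

variable {Λ : Type*} [AddCommGroup Λ] [LinearOrder Λ] [IsOrderedAddMonoid Λ]

instance : CoeFun (OPAffineAut Λ) (fun _ => Λ → Λ) := ⟨fun f => f.toEquiv⟩

theorem ext' {f g : OPAffineAut Λ} (h : ∀ x, f x = g x) : f = g := by
  have he : f.toEquiv = g.toEquiv := Equiv.ext h
  have hd : f.dilation = g.dilation := AddEquiv.ext fun x => by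
    have hf := f.affine x 0
    have hg := g.affine x 0
    rw [sub_zero] at hf hg
    rw [← hf, ← hg]
    show f x - f 0 = g x - g 0
    rw [h x, h 0]
  cases f; cases g
  cases he; cases hd
  rfl

instance : Group (OPAffineAut Λ) where
  one :=
    { toEquiv := Equiv.refl Λ
      strictMono' := strictMono_id
      dilation := AddEquiv.refl Λ
      dilation_strictMono := strictMono_id
      affine := fun _ _ => rfl }
  mul f g :=
    { toEquiv := g.toEquiv.trans f.toEquiv
      strictMono' := f.strictMono'.comp g.strictMono'
      dilation := g.dilation.trans f.dilation
      dilation_strictMono := f.dilation_strictMono.comp g.dilation_strictMono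
      affine := fun x y => by
        simp only [Equiv.trans_apply, AddEquiv.trans_apply]
        rw [f.affine, g.affine] }
  inv f :=
    { toEquiv := f.toEquiv.symm
      strictMono' := fun a b hab => f.strictMono'.lt_iff_lt.1 (by
        simpa only [Equiv.apply_symm_apply] using hab)
      dilation := f.dilation.symm
      dilation_strictMono := fun a b hab => f.dilation_strictMono.lt_iff_lt.1 (by
        simpa only [AddEquiv.apply_symm_apply] using hab)
      affine := fun x y => f.dilation.injective (by
        rw [AddEquiv.apply_symm_apply, ← f.affine, Equiv.apply_symm_apply,
          Equiv.apply_symm_apply]) }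
  mul_assoc f g h := ext' fun _ => rfl
  one_mul f := ext' fun _ => rfl
  mul_one f := ext' fun _ => rfl
  inv_mul_cancel f := ext' fun x => f.toEquiv.symm_apply_apply x

@[simp] theorem mul_apply (f g : OPAffineAut Λ) (x : Λ) : (f * g) x = f (g x) := rfl
@[simp] theorem one_apply (x : Λ) : (1 : OPAffineAut Λ) x = x := rfl
@[simp] theorem inv_apply (f : OPAffineAut Λ) (x : Λ) : f⁻¹ x = f.toEquiv.symm x := rfl

/-- An affine automorphism is *hyperbolic* if it has no fixed point. -/
def Hyperbolic (f : OPAffineAut Λ) : Prop := ∀ x : Λ, f x ≠ x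

/-- An affine automorphism is *rigid* if for `ε = ±1`, whenever `f^ε` moves some point up,
it moves every point up. -/
def Rigid (f : OPAffineAut Λ) : Prop :=
  ∀ ε : ℤ, ε = 1 ∨ ε = -1 → (∃ x : Λ, x < (f ^ ε) x) → ∀ y : Λ, y < (f ^ ε) y

end OPAffineAut

/-- An orientation-preserving affine action (a homomorphism into the group of
orientation-preserving affine automorphisms) is *free* if every nontrivial group element
acts without fixed points. -/
def AffineActionFree {G Λ : Type*} [Group G] [AddCommGroup Λ] [LinearOrder Λ] [IsOrderedAddMonoid Λ]
    (ρ : G →* OPAffineAut Λ) : Prop :=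
  ∀ g : G, g ≠ 1 → ∀ x : Λ, ρ g x ≠ x

/-- An orientation-preserving affine action is *essentially free* if every nontrivial group
element acts as a rigid hyperbolic affine automorphism. -/
def AffineActionEssentiallyFree {G Λ : Type*} [Group G] [AddCommGroup Λ] [LinearOrder Λ] [IsOrderedAddMonoid Λ]
    (ρ : G →* OPAffineAut Λ) : Prop :=
  ∀ g : G, g ≠ 1 → (ρ g).Rigid ∧ (ρ g).Hyperbolic

/-- `G` admits an essentially free orientation-preserving affine action on `Λ`. -/
def HasEssentiallyFreeAffineAction (G : Type*) [Group G] (Λ : Type*)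
    [AddCommGroup Λ] [LinearOrder Λ] [IsOrderedAddMonoid Λ] : Prop :=
  ∃ ρ : G →* OPAffineAut Λ, AffineActionEssentiallyFree ρ

section Matrices

variable {R : Type*} {n : ℕ}

theorem diag_mul_of_triangular [CommRing R] {A B : Matrix (Fin n) (Fin n) R}
    (hA : A.BlockTriangular id) (hB : B.BlockTriangular id) (i : Fin n) :
    (A * B) i i = A i i * B i i := by
  rw [Matrix.mul_apply]
  apply Finset.sum_eq_single i
  · intro k _ hk
    rcases lt_or_gt_of_ne hk with h | h
    · rw [hA (show (id : Fin n → Fin n) k < id i from h), zero_mul]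
    · rw [hB (show (id : Fin n → Fin n) i < id k from h), mul_zero]
  · intro h; exact absurd (Finset.mem_univ i) h

/-- The group `UT(n,R)` of upper triangular `n × n` matrices over `R` with all diagonal
entries equal to `1`, realised as a subgroup of the group of units of the matrix ring. -/
def UT (n : ℕ) (R : Type*) [CommRing R] : Subgroup (Matrix (Fin n) (Fin n) R)ˣ where
  carrier := {A | (∀ i j : Fin n, j < i → (A : Matrix (Fin n) (Fin n) R) i j = 0) ∧
    ∀ i : Fin n, (A : Matrix (Fin n) (Fin n) R) i i = 1}
  one_mem' := by
    refine ⟨fun i j hij => ?_, fun i => ?_⟩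
    · simp [Matrix.one_apply, (ne_of_lt hij).symm]
    · simp
  mul_mem' := by
    rintro A B ⟨hA1, hA2⟩ ⟨hB1, hB2⟩
    have hA : (A : Matrix (Fin n) (Fin n) R).BlockTriangular id := fun i j h => hA1 i j h
    have hB : (B : Matrix (Fin n) (Fin n) R).BlockTriangular id := fun i j h => hB1 i j h
    refine ⟨fun i j hij => ?_, fun i => ?_⟩
    · exact (hA.mul hB) (show (id : Fin n → Fin n) j < id i from hij)
    · rw [Units.val_mul, diag_mul_of_triangular hA hB, hA2, hB2, one_mul]
  inv_mem' := by
    rintro A ⟨hA1, hA2⟩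
    have hA : (A : Matrix (Fin n) (Fin n) R).BlockTriangular id := fun i j h => hA1 i j h
    haveI := A.invertible
    have hAinv : ((A : Matrix (Fin n) (Fin n) R)⁻¹).BlockTriangular id :=
      Matrix.blockTriangular_inv_of_blockTriangular hA
    have hcoe : ((A⁻¹ : (Matrix (Fin n) (Fin n) R)ˣ) : Matrix (Fin n) (Fin n) R)
        = (A : Matrix (Fin n) (Fin n) R)⁻¹ := Matrix.coe_units_inv A
    refine ⟨fun i j hij => ?_, fun i => ?_⟩
    · rw [hcoe]; exact hAinv (show (id : Fin n → Fin n) j < id i from hij)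
    · have h1 : ((A : Matrix (Fin n) (Fin n) R) * (A : Matrix (Fin n) (Fin n) R)⁻¹) i i = 1 := by
        rw [Matrix.mul_inv_of_invertible]; simp
      rw [diag_mul_of_triangular hA hAinv, hA2, one_mul] at h1
      rw [hcoe, h1]

/-- The group `T*(n,R)` of upper triangular `n × n` matrices over a linearly ordered field `R`
with positive diagonal entries, realised as a subgroup of the units of the matrix ring. -/
def Tstar (n : ℕ) (R : Type*) [Field R] [LinearOrder R] [IsStrictOrderedRing R] : Subgroup (Matrix (Fin n) (Fin n) R)ˣ where
  carrier := {A | (∀ i j : Fin n, j < i → (A : Matrix (Fin n) (Fin n) R) i j = 0) ∧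
    ∀ i : Fin n, 0 < (A : Matrix (Fin n) (Fin n) R) i i}
  one_mem' := by
    refine ⟨fun i j hij => ?_, fun i => ?_⟩
    · simp [Matrix.one_apply, (ne_of_lt hij).symm]
    · simp
  mul_mem' := by
    rintro A B ⟨hA1, hA2⟩ ⟨hB1, hB2⟩
    have hA : (A : Matrix (Fin n) (Fin n) R).BlockTriangular id := fun i j h => hA1 i j h
    have hB : (B : Matrix (Fin n) (Fin n) R).BlockTriangular id := fun i j h => hB1 i j h
    refine ⟨fun i j hij => ?_, fun i => ?_⟩
    · exact (hA.mul hB) (show (id : Fin n → Fin n) j < id i from hij)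
    · rw [Units.val_mul, diag_mul_of_triangular hA hB]
      exact mul_pos (hA2 i) (hB2 i)
  inv_mem' := by
    rintro A ⟨hA1, hA2⟩
    have hA : (A : Matrix (Fin n) (Fin n) R).BlockTriangular id := fun i j h => hA1 i j h
    haveI := A.invertible
    have hAinv : ((A : Matrix (Fin n) (Fin n) R)⁻¹).BlockTriangular id :=
      Matrix.blockTriangular_inv_of_blockTriangular hA
    have hcoe : ((A⁻¹ : (Matrix (Fin n) (Fin n) R)ˣ) : Matrix (Fin n) (Fin n) R)
        = (A : Matrix (Fin n) (Fin n) R)⁻¹ := Matrix.coe_units_inv A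
    refine ⟨fun i j hij => ?_, fun i => ?_⟩
    · rw [hcoe]; exact hAinv (show (id : Fin n → Fin n) j < id i from hij)
    · have h1 : ((A : Matrix (Fin n) (Fin n) R) * (A : Matrix (Fin n) (Fin n) R)⁻¹) i i = 1 := by
        rw [Matrix.mul_inv_of_invertible]; simp
      rw [diag_mul_of_triangular hA hAinv] at h1
      rw [hcoe]
      rcases lt_trichotomy ((A : Matrix (Fin n) (Fin n) R)⁻¹ i i) 0 with h | h | h
      · exact absurd h1 (by nlinarith [hA2 i])
      · rw [h, mul_zero] at h1; exact absurd h1 zero_ne_one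
      · exact h

/-- The last index of `Fin N` (any element of `Fin N` witnesses `0 < N`). -/
def lastOf {N : ℕ} (r : Fin N) : Fin N := ⟨N - 1, Nat.sub_lt r.pos Nat.one_pos⟩

/-- A square matrix `g` (upper triangular, with positive diagonal and bottom-right entry `1`)
is *essentially hyperbolic* if `g ≠ 1` and there is a row index `r` which is not the last row
such that `(g-1)_{r,N} ≠ 0` (where `N` is the last column) and every nonzero entry of `g - 1`
lies either in a row strictly above `r`, or at position `(r, N)`. -/
def EssentiallyHyperbolic {N : ℕ} {R : Type*} [CommRing R]
    (g : Matrix (Fin N) (Fin N) R) : Prop :=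
  g ≠ 1 ∧ ∃ r : Fin N, (r : ℕ) + 1 < N ∧ (g - 1) r (lastOf r) ≠ 0 ∧
    ∀ i j : Fin N, (g - 1) i j ≠ 0 → i < r ∨ (i = r ∧ j = lastOf r)

end Matrices

/-- The group of order-preserving additive automorphisms of a linearly ordered abelian
group `Λ`, as a subgroup of `AddAut Λ`. -/
def orderAddAut (Λ : Type*) [AddCommGroup Λ] [LinearOrder Λ] [IsOrderedAddMonoid Λ] : Subgroup (Multiplicative (AddAut Λ)) where
  carrier := {f | StrictMono (Multiplicative.toAdd f : AddAut Λ)}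
  one_mem' := strictMono_id
  mul_mem' := by
    intro f g hf hg a b hab
    exact hf (hg hab)
  inv_mem' := by
    intro f hf a b hab
    exact hf.lt_iff_lt.1 (by simpa using hab)


open Finset

theorem LexPow.lt_iff' {R : Type*} [AddCommGroup R] [LinearOrder R] [IsOrderedAddMonoid R] {m : ℕ} {x y : LexPow R m} :
    x < y ↔ ∃ s : Fin m, (∀ q, s < q → x q = y q) ∧ x s < y s := by
  haveI : WellFoundedLT (Fin m) := inferInstance
  have h : x < y ↔ toRevLex x < toRevLex y := Iff.rfl
  rw [h]
  have h2 : toRevLex x < toRevLex y ↔ Pi.Lex (· < ·) (· < ·) (fun i : Fin m => x (Fin.rev i)) (fun i => y (Fin.rev i)) := Iff.rfl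
  rw [h2]
  constructor
  · rintro ⟨i, hji, hi⟩
    exact ⟨Fin.rev i, fun q hq => by simpa [Fin.rev_rev] using hji (Fin.rev q) (by simpa using Fin.rev_lt_rev.mpr hq), hi⟩
  · rintro ⟨s, hs, hss⟩
    exact ⟨Fin.rev s, fun j hj => hs (Fin.rev j) (by simpa [Fin.rev_rev] using Fin.rev_lt_rev.mpr hj), by simpa [Fin.rev_rev] using hss⟩

theorem LexPow.pos_iff' {R : Type*} [AddCommGroup R] [LinearOrder R] [IsOrderedAddMonoid R] {m : ℕ} {x : LexPow R m} :
    0 < x ↔ ∃ s : Fin m, (∀ q, s < q → x q = 0) ∧ 0 < x s := by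
  rw [LexPow.lt_iff']
  constructor
  · rintro ⟨s, h1, h2⟩; exact ⟨s, fun q hq => (h1 q hq).symm, h2⟩
  · rintro ⟨s, h1, h2⟩; exact ⟨s, fun q hq => (h1 q hq).symm, h2⟩

namespace S14
variable {n : ℕ}

@[simp] theorem LP.sub_apply {R : Type*} [AddCommGroup R] {m : ℕ} (x y : LexPow R m) (i : Fin m) :
    (x - y) i = x i - y i := rfl
@[simp] theorem LP.add_apply {R : Type*} [AddCommGroup R] {m : ℕ} (x y : LexPow R m) (i : Fin m) :
    (x + y) i = x i + y i := rfl
@[simp] theorem LP.zero_apply {R : Type*} [AddCommGroup R] {m : ℕ} (i : Fin m) :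
    (0 : LexPow R m) i = 0 := rfl
@[simp] theorem LP.neg_apply {R : Type*} [AddCommGroup R] {m : ℕ} (x : LexPow R m) (i : Fin m) :
    (-x) i = -(x i) := rfl

noncomputable instance : Module ℚ (LexPow ℚ n) := inferInstanceAs (Module ℚ (Fin n → ℚ))

@[simp] theorem LP.smul_apply (q : ℚ) (x : LexPow ℚ n) (i : Fin n) :
    (q • x) i = q * x i := rfl

def eq' (j : Fin n) : LexPow ℚ n := fun i => if i = j then 1 else 0

@[simp] theorem eq'_apply (j i : Fin n) : eq' j i = if i = j then 1 else 0 := rfl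

instance : CoeOut (orderAddAut (LexPow ℚ n)) (AddAut (LexPow ℚ n)) :=
  ⟨fun f => Multiplicative.toAdd (f : Multiplicative (AddAut (LexPow ℚ n)))⟩

def Mf (f : orderAddAut (LexPow ℚ n)) : Matrix (Fin n) (Fin n) ℚ :=
  fun i j => ((f : AddAut (LexPow ℚ n)) (eq' j)) i

theorem apply_eq (f : orderAddAut (LexPow ℚ n)) (x : LexPow ℚ n) (i : Fin n) :
    ((f : AddAut (LexPow ℚ n)) x) i = ∑ j, Mf f i j * x j := by
  have hx : x = ∑ j, (x j : ℚ) • eq' j := by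
    funext p
    change x p = (∑ j, (x j : ℚ) • (eq' j : Fin n → ℚ)) p
    erw [Finset.sum_apply]
    simp
    exact (Fintype.sum_ite_eq p _).symm
  conv_lhs => rw [hx]
  rw [map_sum]
  have h2 : ∀ j, (f : AddAut (LexPow ℚ n)) ((x j) • eq' j) = (x j) • (f : AddAut (LexPow ℚ n)) (eq' j) :=
    fun j => map_rat_smul _ _ _
  simp_rw [h2]
  erw [Finset.sum_apply]
  exact Finset.sum_congr rfl fun j _ => by
    show x j * Mf f i j = Mf f i j * x j
    exact mul_comm _ _

theorem strictMono_of_mem (f : orderAddAut (LexPow ℚ n)) :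
    StrictMono ((f : AddAut (LexPow ℚ n)) : LexPow ℚ n → LexPow ℚ n) := f.2

theorem map_pos (f : orderAddAut (LexPow ℚ n)) {x : LexPow ℚ n} (hx : 0 < x) :
    0 < (f : AddAut (LexPow ℚ n)) x := by
  have := strictMono_of_mem f hx
  rwa [map_zero] at this

theorem eq'_pos (j : Fin n) : (0 : LexPow ℚ n) < eq' j := by
  refine LexPow.pos_iff'.mpr ⟨j, fun q hq => ?_, ?_⟩
  · simp [ne_of_gt hq]
  · simp

theorem exists_top (f : orderAddAut (LexPow ℚ n)) (j : Fin n) :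
    ∃ t : Fin n, (∀ q, t < q → ((f : AddAut (LexPow ℚ n)) (eq' j)) q = 0) ∧
      0 < ((f : AddAut (LexPow ℚ n)) (eq' j)) t :=
  LexPow.pos_iff'.mp (map_pos f (eq'_pos j))

noncomputable def tau (f : orderAddAut (LexPow ℚ n)) (j : Fin n) : Fin n :=
  (exists_top f j).choose

theorem tau_spec1 (f : orderAddAut (LexPow ℚ n)) (j : Fin n) :
    ∀ q, tau f j < q → ((f : AddAut (LexPow ℚ n)) (eq' j)) q = 0 :=
  (exists_top f j).choose_spec.1

theorem tau_spec2 (f : orderAddAut (LexPow ℚ n)) (j : Fin n) :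
    0 < ((f : AddAut (LexPow ℚ n)) (eq' j)) (tau f j) :=
  (exists_top f j).choose_spec.2

theorem tau_strictMono (f : orderAddAut (LexPow ℚ n)) : StrictMono (tau f) := by
  intro j' j hjj
  by_contra hcon
  push_neg at hcon
  set t' := tau f j' with ht'
  have hc'pos : 0 < ((f : AddAut (LexPow ℚ n)) (eq' j')) t' := tau_spec2 f j'
  set c' : ℚ := ((f : AddAut (LexPow ℚ n)) (eq' j')) t' with hc'
  set c : ℚ := ((f : AddAut (LexPow ℚ n)) (eq' j)) t' with hc
  set q : ℚ := (c + c') / c' with hq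
  have hxpos : (0 : LexPow ℚ n) < eq' j - q • eq' j' := by
    refine LexPow.pos_iff'.mpr ⟨j, fun p hp => ?_, ?_⟩
    · simp [ne_of_gt hp, ne_of_gt (hjj.trans hp)]
    · simp [hjj.ne']
  have hfx : 0 < (f : AddAut (LexPow ℚ n)) (eq' j - q • eq' j') := map_pos f hxpos
  have hval : ∀ p, ((f : AddAut (LexPow ℚ n)) (eq' j - q • eq' j')) p
      = ((f : AddAut (LexPow ℚ n)) (eq' j)) p - q * ((f : AddAut (LexPow ℚ n)) (eq' j')) p := by
    intro p
    rw [map_sub, map_rat_smul]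
    rfl
  obtain ⟨s, hs0, hspos⟩ := LexPow.pos_iff'.mp hfx
  have hvt' : ((f : AddAut (LexPow ℚ n)) (eq' j - q • eq' j')) t' = -c' := by
    rw [hval t', ← hc, ← hc', hq, div_mul_cancel₀ _ (ne_of_gt hc'pos)]
    ring
  rcases lt_trichotomy s t' with h | h | h
  · have h0 := hs0 t' h
    rw [hvt'] at h0
    have : c' = 0 := by linarith
    exact absurd this (ne_of_gt hc'pos)
  · rw [h, hvt'] at hspos; linarith
  · rw [hval s, tau_spec1 f j' s h, tau_spec1 f j s (lt_of_le_of_lt hcon h)] at hspos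
    norm_num at hspos

theorem tau_eq_id (f : orderAddAut (LexPow ℚ n)) (j : Fin n) : tau f j = j := by
  haveI : WellFoundedLT (Fin n) := inferInstance
  have h1 : j ≤ tau f j := (tau_strictMono f).le_apply
  have h2 : StrictMono (fun i : Fin n => Fin.rev (tau f (Fin.rev i))) := by
    intro a b hab
    exact Fin.rev_lt_rev.mpr (tau_strictMono f (Fin.rev_lt_rev.mpr hab))
  have h3 : Fin.rev j ≤ Fin.rev (tau f (Fin.rev (Fin.rev j))) := h2.le_apply
  rw [Fin.rev_rev] at h3
  have h4 : tau f j ≤ j := by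
    have := Fin.rev_le_rev.mp h3
    simpa using this
  exact le_antisymm h4 h1

theorem Mf_tri (f : orderAddAut (LexPow ℚ n)) {i j : Fin n} (h : j < i) : Mf f i j = 0 :=
  tau_spec1 f j i (by rw [tau_eq_id]; exact h)

theorem Mf_diag_pos (f : orderAddAut (LexPow ℚ n)) (j : Fin n) : 0 < Mf f j j := by
  have := tau_spec2 f j
  rwa [tau_eq_id] at this

theorem Mf_one : Mf (1 : orderAddAut (LexPow ℚ n)) = 1 := by
  ext i j
  show ((0 : AddAut (LexPow ℚ n)) (eq' j)) i = (1 : Matrix (Fin n) (Fin n) ℚ) i j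
  rw [Matrix.one_apply]
  simp [eq_comm]

theorem Mf_mul (f g : orderAddAut (LexPow ℚ n)) : Mf (f * g) = Mf f * Mf g := by
  ext i j
  show (((f * g : orderAddAut (LexPow ℚ n)) : AddAut (LexPow ℚ n)) (eq' j)) i = _
  rw [Subgroup.coe_mul]
  show ((f : AddAut (LexPow ℚ n)) ((g : AddAut (LexPow ℚ n)) (eq' j))) i = _
  rw [apply_eq, Matrix.mul_apply]
  exact Finset.sum_congr rfl fun l _ => rfl

theorem Mf_eq_one_iff (f : orderAddAut (LexPow ℚ n)) : Mf f = 1 ↔ f = 1 := by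
  constructor
  · intro h
    have hfx : ∀ x : LexPow ℚ n, (f : AddAut (LexPow ℚ n)) x = x := by
      intro x
      funext i
      show ((f : AddAut (LexPow ℚ n)) x) i = x i
      rw [apply_eq, h]
      simp [Matrix.one_apply]
      exact Fintype.sum_ite_eq i _
    exact Subtype.ext (AddEquiv.ext hfx)
  · intro h; rw [h]; exact Mf_one

end S14
open Finset

namespace S14
variable {n : ℕ}

def base (n i : ℕ) : ℕ := ∑ m ∈ Finset.range i, (n - 1 - m)

def enc (n i j : ℕ) : ℕ := base n i + (n - 1 - j)

theorem base_succ (i : ℕ) : base n (i + 1) = base n i + (n - 1 - i) :=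
  Finset.sum_range_succ _ _

theorem base_mono {i i' : ℕ} (h : i ≤ i') : base n i ≤ base n i' :=
  Finset.sum_le_sum_of_subset (Finset.range_subset_range.mpr h)

theorem base_top : base n (n - 1) = n * (n - 1) / 2 := by
  rcases Nat.eq_zero_or_pos n with h | h
  · subst h; simp [base]
  · have h1 : base n (n - 1) = ∑ m ∈ Finset.range (n - 1), ((n - 1) - 1 - m + 1) := by
      refine Finset.sum_congr rfl fun m hm => ?_
      have := Finset.mem_range.mp hm
      omega
    rw [h1, Finset.sum_range_reflect (fun x => x + 1) (n - 1)]
    have h2 : ∑ m ∈ Finset.range (n - 1), (m + 1) = ∑ m ∈ Finset.range n, m := by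
      obtain ⟨n', rfl⟩ : ∃ n', n = n' + 1 := ⟨n - 1, by omega⟩
      rw [Finset.sum_range_succ' (fun x => x) n']
      simp
    rw [h2, Finset.sum_range_id]

theorem enc_lt_T {i j : ℕ} (hij : i < j) (hj : j < n) : enc n i j < n * (n - 1) / 2 := by
  have h1 : enc n i j < base n (i + 1) := by
    rw [base_succ]; unfold enc; omega
  have h2 : base n (i + 1) ≤ base n (n - 1) := base_mono (by omega)
  rw [base_top] at h2
  omega

theorem enc_row_lt {i j i' j' : ℕ} (hij : i < j) (hj : j < n) (h : i < i') (hi'j' : i' < j') :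
    enc n i j < enc n i' j' := by
  have h1 : enc n i j < base n (i + 1) := by rw [base_succ]; unfold enc; omega
  have h2 : base n (i + 1) ≤ base n i' := base_mono (by omega)
  exact lt_of_lt_of_le h1 (le_trans h2 (Nat.le_add_right _ _))

theorem enc_col_lt {i j j' : ℕ} (hij : i < j) (hj : j < n) (hij' : i < j') (h : j' < j) :
    enc n i j < enc n i j' := by
  unfold enc; omega

theorem enc_inj {i j i' j' : ℕ} (hij : i < j) (hj : j < n) (hi'j' : i' < j') (hj' : j' < n)
    (h : enc n i j = enc n i' j') : i = i' ∧ j = j' := by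
  rcases lt_trichotomy i i' with hc | hc | hc
  · exact absurd h (Nat.ne_of_lt (enc_row_lt hij hj hc hi'j'))
  · subst hc
    refine ⟨rfl, ?_⟩
    unfold enc at h; omega
  · exact absurd h.symm (Nat.ne_of_lt (enc_row_lt hi'j' hj' hc hij))

end S14

namespace S14
variable {n : ℕ}

abbrev TT (n : ℕ) : ℕ := n * (n - 1) / 2
abbrev KK (n : ℕ) : ℕ := n * (n - 1) / 2 + n

def pidx {i j : Fin n} (h : i < j) : Fin (KK n) :=
  ⟨enc n i j, lt_of_lt_of_le (enc_lt_T h j.isLt) (Nat.le_add_right _ _)⟩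

def tidx (a : Fin n) : Fin (KK n) := ⟨TT n + a, Nat.add_lt_add_left a.isLt (TT n)⟩

noncomputable def dd (g : orderAddAut (LexPow ℚ n)) (a : Fin n) : ℝ := (Mf g a a : ℝ)

noncomputable def Rmat (g : orderAddAut (LexPow ℚ n)) : Matrix (Fin n) (Fin n) ℝ :=
  (Mf g).map (Rat.cast)

noncomputable def Dinv (g : orderAddAut (LexPow ℚ n)) : Matrix (Fin n) (Fin n) ℝ :=
  Matrix.diagonal (fun a => (dd g a)⁻¹)

noncomputable def Umat (g : orderAddAut (LexPow ℚ n)) : Matrix (Fin n) (Fin n) ℝ :=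
  Rmat g * Dinv g - 1

theorem dd_pos (g : orderAddAut (LexPow ℚ n)) (a : Fin n) : 0 < dd g a := by
  have := Mf_diag_pos g a
  unfold dd; exact_mod_cast this

theorem dd_ne (g : orderAddAut (LexPow ℚ n)) (a : Fin n) : dd g a ≠ 0 := ne_of_gt (dd_pos g a)

theorem Rmat_tri (g : orderAddAut (LexPow ℚ n)) {i j : Fin n} (h : j < i) : Rmat g i j = 0 := by
  unfold Rmat
  show ((Mf g i j : ℚ) : ℝ) = 0
  rw [Mf_tri g h]; norm_num

theorem Rmat_diag (g : orderAddAut (LexPow ℚ n)) (i : Fin n) : Rmat g i i = dd g i := rfl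

noncomputable def matx (x : LexPow ℝ (KK n)) : Matrix (Fin n) (Fin n) ℝ :=
  fun i j => if h : i < j then x (pidx h) else 0

noncomputable def Amap (g : orderAddAut (LexPow ℚ n)) (x : LexPow ℝ (KK n)) :
    LexPow ℝ (KK n) :=
  fun p => x p + ∑ i : Fin n, ∑ j : Fin n,
    if (i < j ∧ (p : ℕ) = enc n i j) then ((Rmat g * matx x * Dinv g) i j - x p) else 0

noncomputable def bvec (g : orderAddAut (LexPow ℚ n)) : LexPow ℝ (KK n) :=
  fun p => (∑ i : Fin n, ∑ j : Fin n,
      if (i < j ∧ (p : ℕ) = enc n i j) then Umat g i j else 0)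
    + ∑ a : Fin n, if (p : ℕ) = TT n + (a : ℕ) then Real.log (dd g a) else 0

noncomputable def phi (g : orderAddAut (LexPow ℚ n)) (x : LexPow ℝ (KK n)) :
    LexPow ℝ (KK n) :=
  Amap g x + bvec g

/-- evaluation of the pair indicator double sum -/
theorem pairSum_eval (F : Fin n → Fin n → ℝ) {i j : Fin n} (hij : i < j) {p : Fin (KK n)}
    (hp : (p : ℕ) = enc n i j) :
    (∑ i' : Fin n, ∑ j' : Fin n,
      if (i' < j' ∧ (p : ℕ) = enc n i' j') then F i' j' else 0) = F i j := by
  rw [Finset.sum_eq_single i]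
  · rw [Finset.sum_eq_single j]
    · rw [if_pos ⟨hij, hp⟩]
    · intro j' _ hj'
      refine if_neg ?_
      rintro ⟨h1, h2⟩
      rw [hp] at h2
      exact hj' ((Fin.ext_iff.mpr (enc_inj hij j.isLt h1 j'.isLt h2).2.symm))
    · intro h; exact absurd (Finset.mem_univ j) h
  · intro i' _ hi'
    refine Finset.sum_eq_zero fun j' _ => if_neg ?_
    rintro ⟨h1, h2⟩
    rw [hp] at h2
    exact hi' ((Fin.ext_iff.mpr (enc_inj hij j.isLt h1 j'.isLt h2).1.symm))
  · intro h; exact absurd (Finset.mem_univ i) h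

theorem pairSum_zero (F : Fin n → Fin n → ℝ) {p : Fin (KK n)}
    (hp : ∀ i j : Fin n, i < j → (p : ℕ) ≠ enc n i j) :
    (∑ i' : Fin n, ∑ j' : Fin n,
      if (i' < j' ∧ (p : ℕ) = enc n i' j') then F i' j' else 0) = 0 :=
  Finset.sum_eq_zero fun i _ => Finset.sum_eq_zero fun j _ =>
    if_neg (fun ⟨h1, h2⟩ => hp i j h1 h2)

theorem tSum_eval (F : Fin n → ℝ) {a : Fin n} {p : Fin (KK n)} (hp : (p : ℕ) = TT n + a) :
    (∑ a' : Fin n, if (p : ℕ) = TT n + (a' : ℕ) then F a' else 0) = F a := by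
  rw [Finset.sum_eq_single a]
  · rw [if_pos hp]
  · intro a' _ ha'
    refine if_neg fun h => ha' (Fin.ext_iff.mpr ?_)
    omega
  · intro h; exact absurd (Finset.mem_univ a) h

theorem tSum_zero (F : Fin n → ℝ) {p : Fin (KK n)} (hp : (p : ℕ) < TT n) :
    (∑ a' : Fin n, if (p : ℕ) = TT n + (a' : ℕ) then F a' else 0) = 0 :=
  Finset.sum_eq_zero fun a _ => if_neg (by omega)

theorem not_pair_of_ge {p : Fin (KK n)} (hp : TT n ≤ (p : ℕ)) :
    ∀ i j : Fin n, i < j → (p : ℕ) ≠ enc n i j := by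
  intro i j hij h
  exact absurd (h ▸ hp) (not_le.mpr (enc_lt_T hij j.isLt))

theorem Amap_pair (g : orderAddAut (LexPow ℚ n)) (x : LexPow ℝ (KK n)) {i j : Fin n}
    (hij : i < j) {p : Fin (KK n)} (hp : (p : ℕ) = enc n i j) :
    Amap g x p = (Rmat g * matx x * Dinv g) i j := by
  unfold Amap
  rw [pairSum_eval _ hij hp]
  ring

theorem Amap_notpair (g : orderAddAut (LexPow ℚ n)) (x : LexPow ℝ (KK n)) {p : Fin (KK n)}
    (hp : ∀ i j : Fin n, i < j → (p : ℕ) ≠ enc n i j) : Amap g x p = x p := by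
  unfold Amap
  rw [pairSum_zero _ hp]
  ring

theorem bvec_pair (g : orderAddAut (LexPow ℚ n)) {i j : Fin n}
    (hij : i < j) {p : Fin (KK n)} (hp : (p : ℕ) = enc n i j) :
    bvec g p = Umat g i j := by
  unfold bvec
  rw [pairSum_eval (fun i j => Umat g i j) hij hp, tSum_zero]
  · ring
  · rw [hp]; exact enc_lt_T hij j.isLt

theorem bvec_t (g : orderAddAut (LexPow ℚ n)) {a : Fin n} {p : Fin (KK n)}
    (hp : (p : ℕ) = TT n + a) : bvec g p = Real.log (dd g a) := by
  unfold bvec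
  rw [tSum_eval _ hp, pairSum_zero (fun i j => Umat g i j) (not_pair_of_ge (by rw [hp]; exact Nat.le_add_right _ _))]
  ring

end S14

namespace S14
variable {n : ℕ}

theorem Rmat_mul (f g : orderAddAut (LexPow ℚ n)) : Rmat (f * g) = Rmat f * Rmat g := by
  unfold Rmat
  rw [Mf_mul]
  exact Matrix.map_mul (f := Rat.castHom ℝ)

theorem Rmat_one : Rmat (1 : orderAddAut (LexPow ℚ n)) = 1 := by
  unfold Rmat
  rw [Mf_one]
  exact Matrix.map_one _ Rat.cast_zero Rat.cast_one

theorem dd_mul (f g : orderAddAut (LexPow ℚ n)) (a : Fin n) :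
    dd (f * g) a = dd f a * dd g a := by
  unfold dd
  rw [Mf_mul]
  have hAf : (Mf f).BlockTriangular id := fun i j h => Mf_tri f h
  have hAg : (Mf g).BlockTriangular id := fun i j h => Mf_tri g h
  rw [diag_mul_of_triangular hAf hAg]
  push_cast
  ring

theorem dd_one (a : Fin n) : dd (1 : orderAddAut (LexPow ℚ n)) a = 1 := by
  unfold dd
  rw [Mf_one]
  simp

theorem Dinv_mul (f g : orderAddAut (LexPow ℚ n)) : Dinv (f * g) = Dinv g * Dinv f := by
  have h : (fun a : Fin n => (dd (f * g) a)⁻¹) = fun a => (dd g a)⁻¹ * (dd f a)⁻¹ := by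
    funext a
    rw [dd_mul, mul_inv]
    ring
  unfold Dinv
  rw [Matrix.diagonal_mul_diagonal, h]

theorem Dinv_one : Dinv (1 : orderAddAut (LexPow ℚ n)) = 1 := by
  unfold Dinv
  have : (fun a : Fin n => (dd (1 : orderAddAut (LexPow ℚ n)) a)⁻¹) = fun _ => 1 := by
    funext a; rw [dd_one]; norm_num
  rw [this, Matrix.diagonal_one]

/-- strictly upper: `X i j = 0` unless `i < j` -/
def SU (X : Matrix (Fin n) (Fin n) ℝ) : Prop := ∀ i j : Fin n, ¬ i < j → X i j = 0

theorem SU_matx (x : LexPow ℝ (KK n)) : SU (matx x) := by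
  intro i j h
  unfold matx
  rw [dif_neg h]

theorem SU_conj (g : orderAddAut (LexPow ℚ n)) {X : Matrix (Fin n) (Fin n) ℝ} (hX : SU X) :
    SU (Rmat g * X * Dinv g) := by
  intro i j h
  unfold Dinv
  rw [Matrix.mul_diagonal]
  rw [Matrix.mul_apply]
  rw [Finset.sum_eq_zero, zero_mul]
  intro l _
  rcases lt_or_ge l i with hl | hl
  · rw [Rmat_tri g hl, zero_mul]
  · rw [hX l j (fun hc => absurd hc (not_lt.mpr (le_trans (not_lt.mp h) hl))), mul_zero]

theorem SU_Umat (g : orderAddAut (LexPow ℚ n)) : SU (Umat g) := by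
  intro i j h
  unfold Umat Dinv
  rw [Matrix.sub_apply, Matrix.mul_diagonal]
  rcases eq_or_lt_of_le (not_lt.mp h) with hij | hij
  · subst hij
    rw [Rmat_diag, mul_inv_cancel₀ (dd_ne g j), Matrix.one_apply_eq, sub_self]
  · rw [Rmat_tri g hij, Matrix.one_apply_ne (ne_of_gt hij), zero_mul, sub_zero]

theorem matx_Amap (g : orderAddAut (LexPow ℚ n)) (x : LexPow ℝ (KK n)) :
    matx (Amap g x) = Rmat g * matx x * Dinv g := by
  ext i j
  by_cases h : i < j
  · show (if h' : i < j then (Amap g x) (pidx h') else 0) = _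
    rw [dif_pos h]
    exact Amap_pair g x h rfl
  · rw [SU_matx _ i j h, SU_conj g (SU_matx x) i j h]

theorem matx_bvec (g : orderAddAut (LexPow ℚ n)) : matx (bvec g) = Umat g := by
  ext i j
  by_cases h : i < j
  · show (if h' : i < j then (bvec g) (pidx h') else 0) = _
    rw [dif_pos h]
    exact bvec_pair g h rfl
  · rw [SU_matx _ i j h, SU_Umat g i j h]

theorem Amap_mul (f g : orderAddAut (LexPow ℚ n)) (x : LexPow ℝ (KK n)) :
    Amap (f * g) x = Amap f (Amap g x) := by
  funext p
  by_cases hp : ∃ i j : Fin n, i < j ∧ (p : ℕ) = enc n i j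
  · obtain ⟨i, j, hij, he⟩ := hp
    rw [Amap_pair (f * g) x hij he, Amap_pair f (Amap g x) hij he, matx_Amap]
    rw [Rmat_mul, Dinv_mul]
    simp only [Matrix.mul_assoc]
  · push_neg at hp
    have hp' : ∀ i j : Fin n, i < j → (p : ℕ) ≠ enc n i j := fun i j h => hp i j h
    rw [Amap_notpair (f * g) x hp', Amap_notpair f (Amap g x) hp', Amap_notpair g x hp']

theorem Amap_one (x : LexPow ℝ (KK n)) : Amap (1 : orderAddAut (LexPow ℚ n)) x = x := by
  funext p
  by_cases hp : ∃ i j : Fin n, i < j ∧ (p : ℕ) = enc n i j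
  · obtain ⟨i, j, hij, he⟩ := hp
    rw [Amap_pair 1 x hij he, Rmat_one, Dinv_one, Matrix.one_mul, Matrix.mul_one]
    show (if h' : i < j then x (pidx h') else 0) = x p
    rw [dif_pos hij]
    congr 1
    exact Fin.ext he.symm
  · push_neg at hp
    exact Amap_notpair 1 x fun i j h => hp i j h

theorem bvec_mul (f g : orderAddAut (LexPow ℚ n)) :
    bvec (f * g) = Amap f (bvec g) + bvec f := by
  have hU : Umat (f * g) = Rmat f * Umat g * Dinv f + Umat f := by
    unfold Umat
    rw [Rmat_mul, Dinv_mul]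
    have h1 : Rmat f * (Rmat g * Dinv g - 1) * Dinv f
        = Rmat f * Rmat g * (Dinv g * Dinv f) - Rmat f * Dinv f := by
      noncomm_ring
    rw [h1]
    noncomm_ring
  funext p
  show bvec (f * g) p = Amap f (bvec g) p + bvec f p
  by_cases hp : ∃ i j : Fin n, i < j ∧ (p : ℕ) = enc n i j
  · obtain ⟨i, j, hij, he⟩ := hp
    rw [bvec_pair (f * g) hij he, bvec_pair f hij he, Amap_pair f (bvec g) hij he, matx_bvec, hU]
    rw [Matrix.add_apply]
  · push_neg at hp
    have hp' : ∀ i j : Fin n, i < j → (p : ℕ) ≠ enc n i j := fun i j h => hp i j h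
    rw [Amap_notpair f (bvec g) hp']
    rcases lt_or_ge (p : ℕ) (TT n) with hlt | hge
    · unfold bvec
      rw [pairSum_zero (fun i j => Umat _ i j) hp', pairSum_zero (fun i j => Umat _ i j) hp',
          pairSum_zero (fun i j => Umat _ i j) hp',
        tSum_zero _ hlt, tSum_zero _ hlt, tSum_zero _ hlt]
      ring
    · obtain ⟨a, ha⟩ : ∃ a : Fin n, (p : ℕ) = TT n + a := by
        have h2 := p.isLt
        have h3 : KK n = TT n + n := rfl
        refine ⟨⟨(p : ℕ) - TT n, ?_⟩, ?_⟩ <;> [skip; show (p:ℕ) = TT n + ((p:ℕ) - TT n)] <;> omega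
      rw [bvec_t (f * g) ha, bvec_t f ha, bvec_t g ha, dd_mul,
        Real.log_mul (dd_ne f a) (dd_ne g a)]
      ring

theorem bvec_one : bvec (1 : orderAddAut (LexPow ℚ n)) = 0 := by
  funext p
  show bvec 1 p = 0
  by_cases hp : ∃ i j : Fin n, i < j ∧ (p : ℕ) = enc n i j
  · obtain ⟨i, j, hij, he⟩ := hp
    rw [bvec_pair 1 hij he]
    unfold Umat
    rw [Rmat_one, Dinv_one, Matrix.one_mul, sub_self, Matrix.zero_apply]
  · push_neg at hp
    have hp' : ∀ i j : Fin n, i < j → (p : ℕ) ≠ enc n i j := fun i j h => hp i j h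
    rcases lt_or_ge (p : ℕ) (TT n) with hlt | hge
    · unfold bvec
      rw [pairSum_zero (fun i j => Umat _ i j) hp', tSum_zero _ hlt]
      ring
    · obtain ⟨a, ha⟩ : ∃ a : Fin n, (p : ℕ) = TT n + a := by
        have h2 := p.isLt
        have h3 : KK n = TT n + n := rfl
        refine ⟨⟨(p : ℕ) - TT n, ?_⟩, ?_⟩ <;> [skip; show (p:ℕ) = TT n + ((p:ℕ) - TT n)] <;> omega
      rw [bvec_t 1 ha, dd_one]
      simp

end S14

namespace S14
variable {n : ℕ}

theorem matx_add (x y : LexPow ℝ (KK n)) : matx (x + y) = matx x + matx y := by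
  ext i j
  rw [Matrix.add_apply]
  unfold matx
  by_cases h : i < j
  · rw [dif_pos h, dif_pos h, dif_pos h]
    rfl
  · rw [dif_neg h, dif_neg h, dif_neg h]
    ring

theorem Amap_add (g : orderAddAut (LexPow ℚ n)) (x y : LexPow ℝ (KK n)) :
    Amap g (x + y) = Amap g x + Amap g y := by
  funext p
  show Amap g (x + y) p = Amap g x p + Amap g y p
  unfold Amap
  rw [matx_add, mul_add, add_mul, LP.add_apply x y p]
  have h : ∀ (S T : Matrix (Fin n) (Fin n) ℝ) (u v : ℝ),
      (∑ i : Fin n, ∑ j : Fin n,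
        if (i < j ∧ (p : ℕ) = enc n i j) then ((S + T) i j - (u + v)) else 0)
      = (∑ i : Fin n, ∑ j : Fin n, if (i < j ∧ (p : ℕ) = enc n i j) then (S i j - u) else 0)
        + (∑ i : Fin n, ∑ j : Fin n, if (i < j ∧ (p : ℕ) = enc n i j) then (T i j - v) else 0) := by
    intro S T u v
    rw [← Finset.sum_add_distrib]
    refine Finset.sum_congr rfl fun i _ => ?_
    rw [← Finset.sum_add_distrib]
    refine Finset.sum_congr rfl fun j _ => ?_
    split_ifs with hc
    · rw [Matrix.add_apply]; ring
    · ring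
  rw [h]
  ring

noncomputable def AmapHom (g : orderAddAut (LexPow ℚ n)) :
    LexPow ℝ (KK n) →+ LexPow ℝ (KK n) :=
  AddMonoidHom.mk' (Amap g) (Amap_add g)

theorem Amap_sub (g : orderAddAut (LexPow ℚ n)) (x y : LexPow ℝ (KK n)) :
    Amap g (x - y) = Amap g x - Amap g y :=
  map_sub (AmapHom g) x y

theorem phi_mul (f g : orderAddAut (LexPow ℚ n)) (x : LexPow ℝ (KK n)) :
    phi (f * g) x = phi f (phi g x) := by
  show Amap (f * g) x + bvec (f * g) = Amap f (Amap g x + bvec g) + bvec f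
  rw [Amap_mul, bvec_mul, Amap_add]
  abel

theorem phi_one (x : LexPow ℝ (KK n)) : phi (1 : orderAddAut (LexPow ℚ n)) x = x := by
  show Amap 1 x + bvec 1 = x
  rw [Amap_one, bvec_one, add_zero]

theorem row_formula (g : orderAddAut (LexPow ℚ n)) (z : LexPow ℝ (KK n)) {i j : Fin n}
    (hij : i < j) {q : Fin (KK n)} (hq : (q : ℕ) = enc n i j)
    (hz : ∀ r : Fin (KK n), q < r → z r = 0) :
    (Rmat g * matx z * Dinv g) i j = dd g i * z q * (dd g j)⁻¹ := by
  unfold Dinv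
  rw [Matrix.mul_diagonal, Matrix.mul_apply]
  have hsum : (∑ l : Fin n, Rmat g i l * matx z l j) = dd g i * z q := by
    rw [Finset.sum_eq_single i]
    · rw [Rmat_diag]
      unfold matx
      rw [dif_pos hij]
      rw [show pidx hij = q from Fin.ext_iff.mpr hq.symm]
    · intro l _ hl
      rcases lt_or_gt_of_ne hl with h | h
      · rw [Rmat_tri g h, zero_mul]
      · unfold matx
        by_cases hlj : l < j
        · rw [dif_pos hlj, hz (pidx hlj)
            (show (q : ℕ) < enc n l j from hq ▸ enc_row_lt hij j.isLt h hlj), mul_zero]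
        · rw [dif_neg hlj, mul_zero]
    · intro h; exact absurd (Finset.mem_univ i) h
  rw [hsum]

theorem Amap_pos (g : orderAddAut (LexPow ℚ n)) {z : LexPow ℝ (KK n)} (hz : 0 < z) :
    0 < Amap g z := by
  obtain ⟨s, hs0, hss⟩ := LexPow.pos_iff'.mp hz
  refine LexPow.pos_iff'.mpr ⟨s, fun q hq => ?_, ?_⟩
  · by_cases hp : ∃ i j : Fin n, i < j ∧ (q : ℕ) = enc n i j
    · obtain ⟨i, j, hij, he⟩ := hp
      rw [Amap_pair g z hij he,
        row_formula g z hij he (fun r hr => hs0 r (lt_trans hq hr)), hs0 q hq]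
      ring
    · push_neg at hp
      rw [Amap_notpair g z fun i j h => hp i j h]
      exact hs0 q hq
  · by_cases hp : ∃ i j : Fin n, i < j ∧ (s : ℕ) = enc n i j
    · obtain ⟨i, j, hij, he⟩ := hp
      rw [Amap_pair g z hij he, row_formula g z hij he hs0]
      exact mul_pos (mul_pos (dd_pos g i) hss) (inv_pos.mpr (dd_pos g j))
    · push_neg at hp
      rw [Amap_notpair g z fun i j h => hp i j h]
      exact hss

theorem Amap_strictMono (g : orderAddAut (LexPow ℚ n)) : StrictMono (Amap g) := by
  intro a b h
  have h2 : 0 < Amap g (b - a) := Amap_pos g (sub_pos.mpr h)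
  rw [Amap_sub] at h2
  exact sub_pos.mp h2

theorem phi_strictMono (g : orderAddAut (LexPow ℚ n)) : StrictMono (phi g) :=
  fun a b h => add_lt_add_left (Amap_strictMono g h) (bvec g)

end S14

namespace S14
variable {n : ℕ}

theorem phi_apply (g : orderAddAut (LexPow ℚ n)) (x : LexPow ℝ (KK n)) (p : Fin (KK n)) :
    phi g x p = Amap g x p + bvec g p := rfl

theorem rowSum (g : orderAddAut (LexPow ℚ n)) (x : LexPow ℝ (KK n)) {i j : Fin n} (hij : i < j)
    {q : Fin (KK n)} (hq : (q : ℕ) = enc n i j) (hdd : dd g i = 1)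
    (h0 : ∀ l : Fin n, i < l → l < j → Mf g i l = 0) :
    (Rmat g * matx x) i j = x q := by
  rw [Matrix.mul_apply, Finset.sum_eq_single i]
  · rw [Rmat_diag, hdd, one_mul]
    unfold matx
    rw [dif_pos hij, show pidx hij = q from Fin.ext_iff.mpr hq.symm]
  · intro l _ hl
    rcases lt_or_gt_of_ne hl with h | h
    · rw [Rmat_tri g h, zero_mul]
    · by_cases hlj : l < j
      · rw [show Rmat g i l = 0 from by
          show ((Mf g i l : ℚ) : ℝ) = 0
          rw [h0 l h hlj]; norm_num, zero_mul]
      · unfold matx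
        rw [dif_neg hlj, mul_zero]
  · intro h; exact absurd (Finset.mem_univ i) h

theorem key (g : orderAddAut (LexPow ℚ n)) (hg : g ≠ 1) :
    ∃ (r : Fin (KK n)) (c : ℝ), c ≠ 0 ∧ ∀ x : LexPow ℝ (KK n),
      (∀ q, r < q → phi g x q = x q) ∧ phi g x r = x r + c := by
  classical
  by_cases hd : ∃ a : Fin n, Mf g a a ≠ 1
  · -- Case 1 : some diagonal entry differs from 1
    set S : Finset (Fin n) := Finset.univ.filter (fun a => Mf g a a ≠ 1) with hS
    have hSne : S.Nonempty := by
      obtain ⟨a, ha⟩ := hd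
      exact ⟨a, by simp [hS, ha]⟩
    set astar : Fin n := S.max' hSne with hastar
    have hamem : Mf g astar astar ≠ 1 := by
      have h := S.max'_mem hSne
      simp only [hS, Finset.mem_filter, Finset.mem_univ, true_and] at h
      exact h
    have hmax : ∀ a : Fin n, astar < a → Mf g a a = 1 := by
      intro a ha
      by_contra hc
      have : a ∈ S := by simp [hS, hc]
      exact absurd (S.le_max' a this) (not_le.mpr ha)
    refine ⟨tidx astar, Real.log (dd g astar), ?_, fun x => ⟨fun q hq => ?_, ?_⟩⟩
    · refine Real.log_ne_zero_of_pos_of_ne_one (dd_pos g astar) ?_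
      unfold dd
      exact_mod_cast hamem
    · -- coordinates above tidx astar
      have hq' : (TT n : ℕ) + (astar : ℕ) < (q : ℕ) := hq
      have hnp : ∀ i j : Fin n, i < j → (q : ℕ) ≠ enc n i j :=
        not_pair_of_ge (by omega)
      obtain ⟨a, ha⟩ : ∃ a : Fin n, (q : ℕ) = TT n + a := by
        have h2 := q.isLt
        have h3 : KK n = TT n + n := rfl
        refine ⟨⟨(q : ℕ) - TT n, ?_⟩, ?_⟩ <;> [skip; show (q:ℕ) = TT n + ((q:ℕ) - TT n)] <;> omega
      have haa : astar < a := by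
        have : (astar : ℕ) < (a : ℕ) := by omega
        exact this
      rw [phi_apply, Amap_notpair g x hnp, bvec_t g ha]
      have : dd g a = 1 := by
        unfold dd
        rw [hmax a haa]
        norm_num
      rw [this, Real.log_one, add_zero]
    · -- coordinate tidx astar
      have hnp : ∀ i j : Fin n, i < j → ((tidx astar : Fin (KK n)) : ℕ) ≠ enc n i j :=
        not_pair_of_ge (Nat.le_add_right _ _)
      rw [phi_apply, Amap_notpair g x hnp, bvec_t g rfl]
  · -- Case 2 : unipotent
    push_neg at hd
    have hdd1 : ∀ a : Fin n, dd g a = 1 := by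
      intro a
      unfold dd
      rw [hd a]
      norm_num
    have hDinv : Dinv g = 1 := by
      unfold Dinv
      have : (fun a : Fin n => (dd g a)⁻¹) = fun _ => 1 := by
        funext a; rw [hdd1 a]; norm_num
      rw [this, Matrix.diagonal_one]
    have hbnp : ∀ q : Fin (KK n), (∀ i j : Fin n, i < j → (q : ℕ) ≠ enc n i j) →
        bvec g q = 0 := by
      intro q hq
      rcases lt_or_ge (q : ℕ) (TT n) with hlt | hge
      · unfold bvec
        rw [pairSum_zero (fun i j => Umat g i j) hq, tSum_zero _ hlt]
        ring
      · obtain ⟨a, ha⟩ : ∃ a : Fin n, (q : ℕ) = TT n + a := by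
          have h2 := q.isLt
          have h3 : KK n = TT n + n := rfl
          refine ⟨⟨(q : ℕ) - TT n, ?_⟩, ?_⟩ <;> [skip; show (q:ℕ) = TT n + ((q:ℕ) - TT n)] <;> omega
        rw [bvec_t g ha, hdd1, Real.log_one]
    have hUm : ∀ i j : Fin n, i < j → Umat g i j = (Mf g i j : ℝ) := by
      intro i j hij
      unfold Umat
      rw [hDinv, Matrix.mul_one, Matrix.sub_apply, Matrix.one_apply_ne (ne_of_lt hij),
        sub_zero]
      rfl
    have hM : Mf g ≠ 1 := fun h => hg ((Mf_eq_one_iff g).mp h)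
    have hex : ∃ i j : Fin n, i < j ∧ Mf g i j ≠ 0 := by
      by_contra hc
      push_neg at hc
      apply hM
      ext i j
      rcases lt_trichotomy i j with h | h | h
      · rw [hc i j h, Matrix.one_apply_ne (ne_of_lt h)]
      · subst h
        rw [hd i, Matrix.one_apply_eq]
      · rw [Mf_tri g h, Matrix.one_apply_ne (ne_of_gt h)]
    set I : Finset (Fin n) := Finset.univ.filter (fun i => ∃ j, i < j ∧ Mf g i j ≠ 0) with hI
    have hIne : I.Nonempty := by
      obtain ⟨i, j, hij, hne⟩ := hex
      exact ⟨i, by simp only [hI, Finset.mem_filter, Finset.mem_univ, true_and]; exact ⟨j, hij, hne⟩⟩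
    set i0 : Fin n := I.max' hIne with hi0
    have hi0mem : ∃ j, i0 < j ∧ Mf g i0 j ≠ 0 := by
      have h := I.max'_mem hIne
      simp only [hI, Finset.mem_filter, Finset.mem_univ, true_and] at h
      exact h
    have hF1 : ∀ i l : Fin n, i0 < i → i < l → Mf g i l = 0 := by
      intro i l hi hil
      by_contra hc
      have : i ∈ I := by
        simp only [hI, Finset.mem_filter, Finset.mem_univ, true_and]
        exact ⟨l, hil, hc⟩
      exact absurd (I.le_max' i this) (not_le.mpr hi)
    set J : Finset (Fin n) := Finset.univ.filter (fun j => i0 < j ∧ Mf g i0 j ≠ 0) with hJ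
    have hJne : J.Nonempty := by
      obtain ⟨j, h1, h2⟩ := hi0mem
      exact ⟨j, by simp only [hJ, Finset.mem_filter, Finset.mem_univ, true_and]; exact ⟨h1, h2⟩⟩
    set j0 : Fin n := J.min' hJne with hj0
    have hj0mem : i0 < j0 ∧ Mf g i0 j0 ≠ 0 := by
      have h := J.min'_mem hJne
      simp only [hJ, Finset.mem_filter, Finset.mem_univ, true_and] at h
      exact h
    have hF2 : ∀ l : Fin n, i0 < l → l < j0 → Mf g i0 l = 0 := by
      intro l h1 h2
      by_contra hc
      have : l ∈ J := by
        simp only [hJ, Finset.mem_filter, Finset.mem_univ, true_and]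
        exact ⟨h1, hc⟩
      exact absurd (J.min'_le l this) (not_le.mpr h2)
    refine ⟨pidx hj0mem.1, (Mf g i0 j0 : ℝ), by exact_mod_cast hj0mem.2, fun x => ⟨fun q hq => ?_, ?_⟩⟩
    · by_cases hp : ∃ i j : Fin n, i < j ∧ (q : ℕ) = enc n i j
      · obtain ⟨i, j, hij, he⟩ := hp
        have hq' : enc n i0 j0 < enc n i j := by
          have h1 : ((pidx hj0mem.1 : Fin (KK n)) : ℕ) < (q : ℕ) := hq
          rw [he] at h1
          exact h1
        have hrow : ∀ l : Fin n, i < l → l < j → Mf g i l = 0 := by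
          rcases lt_trichotomy i i0 with hc | hc | hc
          · exact absurd (enc_row_lt hij j.isLt hc hj0mem.1) (by omega)
          · subst hc
            have hjj0 : j < j0 := by
              have h2 : (j0 : ℕ) < n := j0.isLt
              have h3 : (j : ℕ) < n := j.isLt
              have : (j : ℕ) < (j0 : ℕ) := by
                unfold enc at hq'
                omega
              exact this
            intro l h1 h2
            exact hF2 l h1 (lt_trans h2 hjj0)
          · exact fun l h1 h2 => hF1 i l hc h1
        have hMij : Mf g i j = 0 := by
          rcases lt_trichotomy i i0 with hc | hc | hc
          · exact absurd (enc_row_lt hij j.isLt hc hj0mem.1) (by omega)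
          · subst hc
            refine hF2 j hij ?_
            have h2 : (j0 : ℕ) < n := j0.isLt
            have h3 : (j : ℕ) < n := j.isLt
            have : (j : ℕ) < (j0 : ℕ) := by
              unfold enc at hq'
              omega
            exact this
          · exact hF1 i j hc hij
        rw [phi_apply, Amap_pair g x hij he, bvec_pair g hij he, hUm i j hij, hMij,
          hDinv, Matrix.mul_one, rowSum g x hij he (hdd1 i) hrow]
        norm_num
      · push_neg at hp
        rw [phi_apply, Amap_notpair g x fun i j h => hp i j h,
          hbnp q fun i j h => hp i j h, add_zero]
    · rw [phi_apply, Amap_pair g x hj0mem.1 (p := pidx hj0mem.1) rfl,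
        bvec_pair g hj0mem.1 (p := pidx hj0mem.1) rfl,
        hUm i0 j0 hj0mem.1, hDinv, Matrix.mul_one,
        rowSum g x hj0mem.1 (q := pidx hj0mem.1) rfl (hdd1 i0) (fun l h1 h2 => hF2 l h1 h2)]

end S14

namespace S14
variable {n : ℕ}

noncomputable def rho1 (g : orderAddAut (LexPow ℚ n)) : OPAffineAut (LexPow ℝ (KK n)) where
  toEquiv :=
    { toFun := phi g
      invFun := phi g⁻¹
      left_inv := fun x => by rw [← phi_mul, inv_mul_cancel, phi_one]
      right_inv := fun x => by rw [← phi_mul, mul_inv_cancel, phi_one] }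
  strictMono' := phi_strictMono g
  dilation :=
    { toFun := Amap g
      invFun := Amap g⁻¹
      left_inv := fun x => by rw [← Amap_mul, inv_mul_cancel, Amap_one]
      right_inv := fun x => by rw [← Amap_mul, mul_inv_cancel, Amap_one]
      map_add' := Amap_add g }
  dilation_strictMono := Amap_strictMono g
  affine := fun x y => by
    show phi g x - phi g y = Amap g (x - y)
    rw [Amap_sub]
    show (Amap g x + bvec g) - (Amap g y + bvec g) = _
    abel

noncomputable def rho : orderAddAut (LexPow ℚ n) →* OPAffineAut (LexPow ℝ (KK n)) :=
  MonoidHom.mk' rho1 (fun f g => OPAffineAut.ext' fun x => phi_mul f g x)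

theorem rho_apply (g : orderAddAut (LexPow ℚ n)) (x : LexPow ℝ (KK n)) :
    (rho g) x = phi g x := rfl

theorem move (g : orderAddAut (LexPow ℚ n)) (hg : g ≠ 1) :
    (∀ x, x < phi g x) ∨ (∀ x, phi g x < x) := by
  obtain ⟨r, c, hc, hall⟩ := key g hg
  rcases lt_or_gt_of_ne hc with h | h
  · right
    intro x
    refine LexPow.lt_iff'.mpr ⟨r, fun q hq => (hall x).1 q hq, ?_⟩
    rw [(hall x).2]
    linarith
  · left
    intro x
    refine LexPow.lt_iff'.mpr ⟨r, fun q hq => ((hall x).1 q hq).symm, ?_⟩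
    rw [(hall x).2]
    linarith

theorem main (n : ℕ) :
    ∃ ρ : orderAddAut (LexPow ℚ n) →* OPAffineAut (LexPow ℝ (n * (n - 1) / 2 + n)),
      AffineActionEssentiallyFree ρ := by
  refine ⟨rho, ?_⟩
  intro g hg
  constructor
  · -- Rigid
    intro ε hε hex y
    rcases hε with rfl | rfl
    · rw [zpow_one] at hex ⊢
      rcases move g hg with h | h
      · exact h y
      · obtain ⟨x, hx⟩ := hex
        exact absurd hx (not_lt.mpr (le_of_lt (h x)))
    · rw [zpow_neg_one, ← map_inv rho g] at hex ⊢
      rcases move g⁻¹ (inv_ne_one.mpr hg) with h | h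
      · exact h y
      · obtain ⟨x, hx⟩ := hex
        exact absurd hx (not_lt.mpr (le_of_lt (h x)))
  · -- Hyperbolic
    intro x heq
    obtain ⟨r, c, hc, hall⟩ := key g hg
    have h1 : phi g x r = x r := by
      have := congrArg (fun z : LexPow ℝ (KK n) => z r) heq
      exact this
    rw [(hall x).2] at h1
    exact hc (by linarith)

end S14

/-- The group of order-preserving group automorphisms of `ℚ^n_lex` admits
an essentially free orientation-preserving affine action on `ℝ^k_lex`, `k = n(n-1)/2 + n`. -/
theorem orderAddAut_lexPow_rat_hasEssentiallyFreeAffineAction (n : ℕ) :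
    ∃ ρ : orderAddAut (LexPow ℚ n) →* OPAffineAut (LexPow ℝ (n * (n - 1) / 2 + n)),
      AffineActionEssentiallyFree ρ :=
  S14.main n
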